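/- Let (X, P) solve the extremal system on [T − ε, T] with control constantly equal to c ∈ {−1, +1}, and suppose X(T) = (0, 0, 1) and P(T) = λ (0, 0, 1) for some λ ∈ ℝ. Then there exists δ > 0 such that for all t ∈ (T − δ, T), the switching function Φ(t) is nonzero and has sign opposite to c (i.e. c · Φ(t) < 0). In particular the Pontryagin maximization condition u(t) = sign Φ(t) fails on (T − δ, T). -/

import Mathlib

open Set

lemma step_neg' {a T : ℝ} (haT : a ≤ T) {g d : ℝ → ℝ}
    (hd : ∀ t ∈ Icc a T, HasDerivWithinAt g (d t) (Icc a T) t)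
    (hneg : ∀ t ∈ Ioo a T, d t < 0) (hT : g T = 0) :
    ∀ t ∈ Ico a T, 0 < g t := by
  have hcont : ContinuousOn g (Icc a T) := fun t ht => (hd t ht).continuousWithinAt
  have hanti : StrictAntiOn g (Icc a T) := by
    apply strictAntiOn_of_deriv_neg (convex_Icc a T) hcont
    intro x hx
    rw [interior_Icc] at hx
    rw [((hd x (Ioo_subset_Icc_self hx)).hasDerivAt (Icc_mem_nhds hx.1 hx.2)).deriv]
    exact hneg x hx
  intro t ht
  have := hanti ⟨ht.1, ht.2.le⟩ (right_mem_Icc.2 haT) ht.2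
  linarith

lemma step_pos' {a T : ℝ} (haT : a ≤ T) {g d : ℝ → ℝ}
    (hd : ∀ t ∈ Icc a T, HasDerivWithinAt g (d t) (Icc a T) t)
    (hpos : ∀ t ∈ Ioo a T, 0 < d t) (hT : g T = 0) :
    ∀ t ∈ Ico a T, g t < 0 := by
  have := step_neg' haT (g := fun t => -g t) (d := fun t => -d t)
    (fun t ht => (hd t ht).neg) (fun t ht => by simpa using hpos t ht) (by simp [hT])
  intro t ht
  have := this t ht
  simpa using this

lemma quad_neg {a T : ℝ} (haT : a < T) {f g1 g2 g3 g4 : ℝ → ℝ}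
    (h1 : ∀ t ∈ Icc a T, HasDerivWithinAt f (g1 t) (Icc a T) t)
    (h2 : ∀ t ∈ Icc a T, HasDerivWithinAt g1 (g2 t) (Icc a T) t)
    (h3 : ∀ t ∈ Icc a T, HasDerivWithinAt g2 (g3 t) (Icc a T) t)
    (h4 : ∀ t ∈ Icc a T, HasDerivWithinAt g3 (g4 t) (Icc a T) t)
    (hc : ContinuousOn g4 (Icc a T))
    (v0 : f T = 0) (v1 : g1 T = 0) (v2 : g2 T = 0) (v3 : g3 T = 0) (v4 : g4 T < 0) :
    ∃ δ : ℝ, 0 < δ ∧ δ ≤ T - a ∧ ∀ t ∈ Ioo (T - δ) T, f t < 0 := by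
  have hct : ContinuousWithinAt g4 (Icc a T) T := hc T (right_mem_Icc.2 haT.le)
  rw [Metric.continuousWithinAt_iff] at hct
  obtain ⟨δ', hδ', hδ'prop⟩ := hct (-g4 T) (by linarith)
  have hδpos : 0 < min (δ'/2) (T - a) := lt_min (by linarith) (by linarith)
  refine ⟨min (δ'/2) (T - a), hδpos, min_le_right _ _, ?_⟩
  set δ := min (δ'/2) (T - a) with hδdef
  have hsub : Icc (T - δ) T ⊆ Icc a T := by
    apply Icc_subset_Icc_left
    have : δ ≤ T - a := min_le_right _ _
    linarith
  have hle : T - δ ≤ T := by linarith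
  have hg4 : ∀ t ∈ Icc (T - δ) T, g4 t < 0 := by
    intro t ht
    have hd : dist t T < δ' := by
      rw [Real.dist_eq, abs_sub_comm, abs_of_nonneg (by linarith [ht.2])]
      have h1 : T - t ≤ δ := by linarith [ht.1]
      have h2 : δ ≤ δ'/2 := min_le_left _ _
      linarith
    have := hδ'prop (hsub ht) hd
    rw [Real.dist_eq] at this
    have := abs_lt.1 this
    linarith [this.2]
  -- restrict derivatives to the small interval
  have H1 : ∀ t ∈ Icc (T - δ) T, HasDerivWithinAt f (g1 t) (Icc (T - δ) T) t :=
    fun t ht => (h1 t (hsub ht)).mono hsub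
  have H2 : ∀ t ∈ Icc (T - δ) T, HasDerivWithinAt g1 (g2 t) (Icc (T - δ) T) t :=
    fun t ht => (h2 t (hsub ht)).mono hsub
  have H3 : ∀ t ∈ Icc (T - δ) T, HasDerivWithinAt g2 (g3 t) (Icc (T - δ) T) t :=
    fun t ht => (h3 t (hsub ht)).mono hsub
  have H4 : ∀ t ∈ Icc (T - δ) T, HasDerivWithinAt g3 (g4 t) (Icc (T - δ) T) t :=
    fun t ht => (h4 t (hsub ht)).mono hsub
  have k3 : ∀ t ∈ Ico (T - δ) T, 0 < g3 t :=
    step_neg' hle H4 (fun t ht => hg4 t (Ioo_subset_Icc_self ht)) v3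
  have k2 : ∀ t ∈ Ico (T - δ) T, g2 t < 0 :=
    step_pos' hle H3 (fun t ht => k3 t (Ioo_subset_Ico_self ht)) v2
  have k1 : ∀ t ∈ Ico (T - δ) T, 0 < g1 t :=
    step_neg' hle H2 (fun t ht => k2 t (Ioo_subset_Ico_self ht)) v1
  have k0 : ∀ t ∈ Ico (T - δ) T, f t < 0 :=
    step_pos' hle H1 (fun t ht => k1 t (Ioo_subset_Ico_self ht)) v0
  exact fun t ht => k0 t (Ioo_subset_Ico_self ht)

/-- Let (X, P) solve the extremal system on [T − ε, T] with control
constantly c ∈ {−1, +1}, with X(T) = (0, 0, 1) and P(T) = λ (0, 0, 1).  Then there is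
δ > 0 such that on (T − δ, T) the switching function Φ = p3 x2 − p2 x3 is nonzero with
sign opposite to c (c Φ < 0); in particular the Pontryagin maximization condition
u(t) = sign Φ(t) fails there. -/
theorem switching_function_opposite_sign_near_target
    (Δ : ℝ) (hΔ : Δ ≠ 0) (T ε c lam : ℝ) (hε : 0 < ε) (hc : c = 1 ∨ c = -1)
    (x1 x2 x3 p1 p2 p3 : ℝ → ℝ)
    (hx1 : ∀ t ∈ Icc (T - ε) T, HasDerivWithinAt x1 (-Δ * x2 t) (Icc (T - ε) T) t)
    (hx2 : ∀ t ∈ Icc (T - ε) T, HasDerivWithinAt x2 (Δ * x1 t - c * x3 t) (Icc (T - ε) T) t)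
    (hx3 : ∀ t ∈ Icc (T - ε) T, HasDerivWithinAt x3 (c * x2 t) (Icc (T - ε) T) t)
    (hp1 : ∀ t ∈ Icc (T - ε) T, HasDerivWithinAt p1 (-Δ * p2 t + x1 t) (Icc (T - ε) T) t)
    (hp2 : ∀ t ∈ Icc (T - ε) T, HasDerivWithinAt p2 (Δ * p1 t - c * p3 t) (Icc (T - ε) T) t)
    (hp3 : ∀ t ∈ Icc (T - ε) T, HasDerivWithinAt p3 (c * p2 t) (Icc (T - ε) T) t)
    (hXT : x1 T = 0 ∧ x2 T = 0 ∧ x3 T = 1)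
    (hPT : p1 T = 0 ∧ p2 T = 0 ∧ p3 T = lam) :
    ∃ δ : ℝ, 0 < δ ∧ δ ≤ ε ∧ ∀ t ∈ Ioo (T - δ) T,
      p3 t * x2 t - p2 t * x3 t ≠ 0 ∧
      c * (p3 t * x2 t - p2 t * x3 t) < 0 ∧
      c ≠ Real.sign (p3 t * x2 t - p2 t * x3 t) := by
  obtain ⟨hX1, hX2, hX3⟩ := hXT
  obtain ⟨hP1, hP2, hP3⟩ := hPT
  set S := Icc (T - ε) T with hSdef
  set f : ℝ → ℝ := fun t => p3 t * x2 t - p2 t * x3 t with hf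
  set g1 : ℝ → ℝ := fun t => Δ * (p3 t * x1 t - p1 t * x3 t) with hg1
  set g2 : ℝ → ℝ := fun t =>
    Δ * (c * (p2 t * x1 t - p1 t * x2 t) - Δ * (p3 t * x2 t - p2 t * x3 t) - x1 t * x3 t)
    with hg2
  set g3 : ℝ → ℝ := fun t =>
    Δ * (-(Δ^2 + c^2) * (p3 t * x1 t - p1 t * x3 t) - 2*c*(x1 t * x2 t) + Δ * (x2 t * x3 t))
    with hg3
  set g4 : ℝ → ℝ := fun t =>
    Δ * (-(Δ^2 + c^2) * (c * (p2 t * x1 t - p1 t * x2 t)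
          - Δ * (p3 t * x2 t - p2 t * x3 t) - x1 t * x3 t)
      - 2*c*(-Δ*(x2 t)^2 + Δ*(x1 t)^2 - c*(x1 t * x3 t))
      + Δ*(Δ*(x1 t * x3 t) - c*(x3 t)^2 + c*(x2 t)^2)) with hg4
  have H1 : ∀ t ∈ S, HasDerivWithinAt f (g1 t) S t := by
    intro t ht
    have := ((hp3 t ht).mul (hx2 t ht)).sub ((hp2 t ht).mul (hx3 t ht))
    convert this using 1
    iterate 3 rfl
    simp only [hg1]; ring
  have H2 : ∀ t ∈ S, HasDerivWithinAt g1 (g2 t) S t := by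
    intro t ht
    have := (((hp3 t ht).mul (hx1 t ht)).sub ((hp1 t ht).mul (hx3 t ht))).const_mul Δ
    convert this using 1
    iterate 3 rfl
    simp only [hg2]; ring
  have H3 : ∀ t ∈ S, HasDerivWithinAt g2 (g3 t) S t := by
    intro t ht
    have := ((((((hp2 t ht).mul (hx1 t ht)).sub ((hp1 t ht).mul (hx2 t ht))).const_mul c).sub
      ((((hp3 t ht).mul (hx2 t ht)).sub ((hp2 t ht).mul (hx3 t ht))).const_mul Δ)).sub
      ((hx1 t ht).mul (hx3 t ht))).const_mul Δ
    convert this using 1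
    iterate 3 rfl
    simp only [hg3]; ring
  have H4 : ∀ t ∈ S, HasDerivWithinAt g3 (g4 t) S t := by
    intro t ht
    have A := (((hp3 t ht).mul (hx1 t ht)).sub ((hp1 t ht).mul (hx3 t ht))).const_mul (-(Δ^2 + c^2))
    have B := (((hx1 t ht).mul (hx2 t ht)).const_mul (2*c))
    have C := (((hx2 t ht).mul (hx3 t ht)).const_mul Δ)
    have := ((A.sub B).add C).const_mul Δ
    convert this using 1
    iterate 3 rfl
    simp only [hg4]; ring
  have Hc : ContinuousOn g4 S := by
    have c1 : ContinuousOn x1 S := fun t ht => (hx1 t ht).continuousWithinAt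
    have c2 : ContinuousOn x2 S := fun t ht => (hx2 t ht).continuousWithinAt
    have c3 : ContinuousOn x3 S := fun t ht => (hx3 t ht).continuousWithinAt
    have d1 : ContinuousOn p1 S := fun t ht => (hp1 t ht).continuousWithinAt
    have d2 : ContinuousOn p2 S := fun t ht => (hp2 t ht).continuousWithinAt
    have d3 : ContinuousOn p3 S := fun t ht => (hp3 t ht).continuousWithinAt
    rw [hg4]
    fun_prop
  have v0 : f T = 0 := by simp [hf, hX2, hX3, hP2, hP3]
  have v1 : g1 T = 0 := by simp [hg1, hX1, hX3, hP1, hP3]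
  have v2 : g2 T = 0 := by simp [hg2, hX1, hX2, hX3, hP1, hP2, hP3]
  have v3 : g3 T = 0 := by simp [hg3, hX1, hX2, hX3, hP1, hP3]
  have v4 : g4 T = -Δ^2 * c := by
    simp only [hg4, hX1, hX2, hX3, hP1, hP2, hP3]; ring
  have hTa : T - ε < T := by linarith
  have hΔ2 : 0 < Δ^2 := by positivity
  rcases hc with rfl | rfl
  · -- c = 1 : g4 T = -Δ² < 0, f < 0 near T
    have v4' : g4 T < 0 := by rw [v4]; linarith
    obtain ⟨δ, hδpos, hδle, hfneg⟩ := quad_neg hTa H1 H2 H3 H4 Hc v0 v1 v2 v3 v4'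
    refine ⟨δ, hδpos, by linarith, ?_⟩
    intro t ht
    have hft := hfneg t ht
    simp only [hf] at hft
    refine ⟨by linarith, by linarith, ?_⟩
    rw [Real.sign_of_neg hft]
    norm_num
  · -- c = -1 : g4 T = Δ² > 0, apply quad_neg to negations
    have v4' : -g4 T < 0 := by rw [v4]; nlinarith
    obtain ⟨δ, hδpos, hδle, hfneg⟩ := quad_neg hTa
      (f := fun t => -f t) (g1 := fun t => -g1 t) (g2 := fun t => -g2 t)
      (g3 := fun t => -g3 t) (g4 := fun t => -g4 t)
      (fun t ht => (H1 t ht).neg) (fun t ht => (H2 t ht).neg)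
      (fun t ht => (H3 t ht).neg) (fun t ht => (H4 t ht).neg)
      (Hc.neg) (by simp [v0]) (by simp [v1]) (by simp [v2]) (by simp [v3]) v4'
    refine ⟨δ, hδpos, by linarith, ?_⟩
    intro t ht
    have hft := hfneg t ht
    simp only [hf, neg_sub] at hft
    have hpos : 0 < p3 t * x2 t - p2 t * x3 t := by linarith
    refine ⟨by linarith, by linarith, ?_⟩
    rw [Real.sign_of_pos hpos]
    norm_num
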